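/- Let T ≥ 1 be a natural number and let C = ℂ^{T+1} with standard orthonormal basis e₀, …, e_T. Let A, P₁, P₂ be nontrivial finite-dimensional complex inner product spaces, let a₀ ∈ A be a unit vector, let ψ ∈ P₁ ⊗ P₂ be a unit vector, and let w₁, …, w_T ∈ A ⊗ (P₁ ⊗ P₂) be unit vectors. Define the history state η = (1/√(T+1)) (e₀ ⊗ (a₀ ⊗ ψ) + Σ_{t=1}^{T} e_t ⊗ w_t) in C ⊗ (A ⊗ (P₁ ⊗ P₂)). Suppose ψ₁ ∈ (C ⊗ A) ⊗ P₁ and ψ₂ ∈ P₂ are unit vectors and ε ≥ 0 satisfy |⟨η, ι(ψ₁ ⊗ ψ₂)⟩|² ≥ 1 − ε, where ι is the canonical inner-product-preserving isomorphism ((C ⊗ A) ⊗ P₁) ⊗ P₂ ≅ C ⊗ (A ⊗ (P₁ ⊗ P₂)). Then there exists a unit vector L ∈ P₁ such that |⟨ψ, L ⊗ ψ₂⟩|² ≥ 1 − ε(T+1). -/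

import Mathlib

open scoped InnerProductSpace

/-- The tensor product of two vectors: `(u ⊗ v)(i,j) = uᵢ · vⱼ`. -/
noncomputable def tensorVec {ι κ : Type*} [Fintype ι] [Fintype κ]
    (u : EuclideanSpace ℂ ι) (v : EuclideanSpace ℂ κ) : EuclideanSpace ℂ (ι × κ) :=
  WithLp.toLp 2 (fun p : ι × κ => u p.1 * v p.2)

/-- The canonical inner-product-preserving isomorphism
`((C ⊗ A) ⊗ P₁) ⊗ P₂ ≅ C ⊗ (A ⊗ (P₁ ⊗ P₂))`, realized as reindexing. -/
noncomputable def reassoc {ιC ιA ι₁ ι₂ : Type*} [Fintype ιC] [Fintype ιA] [Fintype ι₁] [Fintype ι₂]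
    (x : EuclideanSpace ℂ (((ιC × ιA) × ι₁) × ι₂)) :
    EuclideanSpace ℂ (ιC × (ιA × (ι₁ × ι₂))) :=
  WithLp.toLp 2 (fun p : ιC × (ιA × (ι₁ × ι₂)) => x (((p.1, p.2.1), p.2.2.1), p.2.2.2))

open Finset

lemma inner_eucl {ι : Type*} [Fintype ι] (x y : EuclideanSpace ℂ ι) :
    ⟪x, y⟫_ℂ = ∑ i, (starRingEnd ℂ) (x i) * y i := by
  simp [PiLp.inner_apply, RCLike.inner_apply, mul_comm]

lemma normsq_eucl {ι : Type*} [Fintype ι] (x : EuclideanSpace ℂ ι) :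
    ‖x‖ ^ 2 = ∑ i, ‖x i‖ ^ 2 := by
  rw [EuclideanSpace.norm_eq, Real.sq_sqrt (by positivity)]

lemma tensorVec_apply {ι κ : Type*} [Fintype ι] [Fintype κ]
    (u : EuclideanSpace ℂ ι) (v : EuclideanSpace ℂ κ) (p : ι × κ) :
    tensorVec u v p = u p.1 * v p.2 := rfl

lemma tensorVec_smul {ι κ : Type*} [Fintype ι] [Fintype κ] (z : ℂ)
    (u : EuclideanSpace ℂ ι) (v : EuclideanSpace ℂ κ) :
    tensorVec (z • u) v = z • tensorVec u v := by
  ext p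
  simp [tensorVec, mul_assoc]

lemma norm_tensorVec {ι κ : Type*} [Fintype ι] [Fintype κ]
    (u : EuclideanSpace ℂ ι) (v : EuclideanSpace ℂ κ) :
    ‖tensorVec u v‖ = ‖u‖ * ‖v‖ := by
  have h : ‖tensorVec u v‖ ^ 2 = (‖u‖ * ‖v‖) ^ 2 := by
    rw [normsq_eucl, mul_pow, normsq_eucl, normsq_eucl, Finset.sum_mul_sum,
      Fintype.sum_prod_type]
    simp [tensorVec_apply, mul_pow]
  have h1 : (0:ℝ) ≤ ‖tensorVec u v‖ := norm_nonneg _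
  have h2 : (0:ℝ) ≤ ‖u‖ * ‖v‖ := by positivity
  nlinarith
lemma inner_single_tensor {ι κ : Type*} [Fintype ι] [DecidableEq ι] [Fintype κ] (t : ι)
    (u : EuclideanSpace ℂ κ) (X : EuclideanSpace ℂ (ι × κ)) :
    ⟪tensorVec (EuclideanSpace.single t 1) u, X⟫_ℂ = ∑ p, (starRingEnd ℂ) (u p) * X (t, p) := by
  rw [inner_eucl, Fintype.sum_prod_type]
  rw [Finset.sum_eq_single t]
  · simp [tensorVec_apply]
  · intro b _ hb
    simp [tensorVec_apply, EuclideanSpace.single_apply, hb]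
  · simp

lemma key_rearrange {A P1 P2 : Type*} [Fintype A] [Fintype P1] [Fintype P2]
    (a₀ : EuclideanSpace ℂ A) (ψ : EuclideanSpace ℂ (P1 × P2)) (ψ₂ : EuclideanSpace ℂ P2)
    (F : A → P1 → ℂ) :
    ⟪tensorVec a₀ ψ, (WithLp.toLp 2 (fun p : A × (P1 × P2) => F p.1 p.2.1 * ψ₂ p.2.2) : EuclideanSpace ℂ (A × (P1 × P2)))⟫_ℂ
      = ⟪ψ, tensorVec (WithLp.toLp 2 (fun j : P1 => ∑ a, (starRingEnd ℂ) (a₀ a) * F a j) : EuclideanSpace ℂ P1) ψ₂⟫_ℂ := by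
  simp only [inner_eucl, Fintype.sum_prod_type, tensorVec_apply, PiLp.toLp_apply, map_mul,
    Finset.mul_sum, Finset.sum_mul]
  rw [Finset.sum_comm]
  refine Finset.sum_congr rfl fun j _ => ?_
  rw [Finset.sum_comm]
  refine Finset.sum_congr rfl fun a _ => Finset.sum_congr rfl fun k _ => by ring

set_option maxHeartbeats 800000 in
lemma endgame (T s g0 cn S ε : ℝ) (hT : 1 ≤ T) (hε : 0 ≤ ε) (hcn : 0 ≤ cn) (hS : 0 ≤ S)
    (hs0 : 0 ≤ s) (h2 : cn ^ 2 ≤ s) (h3 : s ≤ g0) (h4 : g0 ≤ 1)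
    (hSsq : S ^ 2 ≤ T * (1 - g0))
    (hmain : 1 - ε ≤ (T + 1)⁻¹ * (cn + S) ^ 2)
    (hnt : 0 < 1 - ε * (T + 1)) :
    0 < s ∧ s * (1 - ε * (T + 1)) ≤ cn ^ 2 := by
  have hT0 : (0:ℝ) ≤ T := by linarith
  have hT1 : (0:ℝ) < T + 1 := by linarith
  have hA' : (T + 1) * (1 - ε) ≤ (cn + S) ^ 2 := by
    have h := mul_le_mul_of_nonneg_left hmain hT1.le
    rwa [← mul_assoc, mul_inv_cancel₀ hT1.ne', one_mul] at h
  have hε1 : ε < 1 := by nlinarith [mul_nonneg hε hT0]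
  have hs1 : s ≤ 1 := le_trans h3 h4
  have hA0 : (0:ℝ) ≤ (T + 1) * (1 - ε) := by nlinarith
  have hB0 : (0:ℝ) ≤ T * (1 - s) := by nlinarith
  set A : ℝ := (T + 1) * (1 - ε) with hAdef
  set B : ℝ := T * (1 - s) with hBdef
  -- S ≤ √B
  have hSB : S ≤ Real.sqrt B := by
    have h1 : S ^ 2 ≤ B := by nlinarith
    calc S = Real.sqrt (S ^ 2) := (Real.sqrt_sq hS).symm
    _ ≤ Real.sqrt B := Real.sqrt_le_sqrt h1
  -- √A ≤ cn + S
  have hcnS : Real.sqrt A ≤ cn + S := by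
    calc Real.sqrt A ≤ Real.sqrt ((cn + S) ^ 2) := Real.sqrt_le_sqrt hA'
    _ = cn + S := Real.sqrt_sq (by linarith)
  have hBA : B < A := by rw [hAdef, hBdef]; nlinarith [mul_nonneg hT0 hs0]
  have hsqBA : Real.sqrt B < Real.sqrt A := Real.sqrt_lt_sqrt hB0 hBA
  have hcnlb : Real.sqrt A - Real.sqrt B ≤ cn := by linarith
  have hcnpos : 0 < cn := by linarith
  have hspos : 0 < s := lt_of_lt_of_le (pow_pos hcnpos 2) h2
  refine ⟨hspos, ?_⟩
  -- cn² ≥ (√A - √B)² = A + B - 2√(AB)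
  have hsqA : Real.sqrt A ^ 2 = A := Real.sq_sqrt hA0
  have hsqB : Real.sqrt B ^ 2 = B := Real.sq_sqrt hB0
  have hkey : A + B - 2 * Real.sqrt A * Real.sqrt B ≤ cn ^ 2 := by
    nlinarith [sq_nonneg (Real.sqrt A - Real.sqrt B)]
  -- √A √B = √T √u with u = A(1-s)
  set u : ℝ := A * (1 - s) with hudef
  have hu0 : 0 ≤ u := mul_nonneg hA0 (by linarith)
  have hAB : Real.sqrt A * Real.sqrt B = Real.sqrt T * Real.sqrt u := by
    rw [← Real.sqrt_mul hA0, ← Real.sqrt_mul hT0]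
    congr 1
    rw [hBdef, hudef]; ring
  have hsqT : Real.sqrt T ^ 2 = T := Real.sq_sqrt hT0
  have hsqu : Real.sqrt u ^ 2 = u := Real.sq_sqrt hu0
  have hamgm : 2 * Real.sqrt T * Real.sqrt u ≤ T + u := by
    nlinarith [sq_nonneg (Real.sqrt T - Real.sqrt u)]
  have hid : A + B - (T + u) = s * (1 - ε * (T + 1)) := by
    rw [hAdef, hBdef, hudef]; ring
  rw [mul_assoc, hAB] at hkey
  linarith

set_option maxHeartbeats 1000000 in
/-- **Lemma (Step two).** If a history state
`η = (1/√(T+1)) (e₀ ⊗ a₀ ⊗ ψ + Σ_{t=1}^T e_t ⊗ w_t)` has squared overlap at least `1 − ε`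
with a product state `ψ₁ ⊗ ψ₂` across the cut `(clock ⊗ ancilla ⊗ first proof)` versus
`(second proof)`, then the witness `ψ` is `(1 − ε(T+1))`-close to a product state
`L ⊗ ψ₂`. -/
theorem step_two
    (T dA d₁ d₂ : ℕ) (hT : 1 ≤ T) (hdA : 1 ≤ dA) (hd₁ : 1 ≤ d₁) (hd₂ : 1 ≤ d₂)
    (a₀ : EuclideanSpace ℂ (Fin dA)) (ha₀ : ‖a₀‖ = 1)
    (ψ : EuclideanSpace ℂ (Fin d₁ × Fin d₂)) (hψ : ‖ψ‖ = 1)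
    (w : Fin (T + 1) → EuclideanSpace ℂ (Fin dA × (Fin d₁ × Fin d₂)))
    (hw : ∀ t, t ≠ 0 → ‖w t‖ = 1)
    (η : EuclideanSpace ℂ (Fin (T + 1) × (Fin dA × (Fin d₁ × Fin d₂))))
    (hη : η = ((Real.sqrt (T + 1) : ℂ))⁻¹ •
      (tensorVec (EuclideanSpace.single 0 1) (tensorVec a₀ ψ) +
        ∑ t ∈ Finset.univ.filter (fun t : Fin (T + 1) => t ≠ 0),
          tensorVec (EuclideanSpace.single t 1) (w t)))
    (ψ₁ : EuclideanSpace ℂ ((Fin (T + 1) × Fin dA) × Fin d₁)) (hψ₁ : ‖ψ₁‖ = 1)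
    (ψ₂ : EuclideanSpace ℂ (Fin d₂)) (hψ₂ : ‖ψ₂‖ = 1)
    (ε : ℝ) (hε : 0 ≤ ε)
    (hclose : 1 - ε ≤ ‖⟪η, reassoc (tensorVec ψ₁ ψ₂)⟫_ℂ‖ ^ 2) :
    ∃ L : EuclideanSpace ℂ (Fin d₁),
      ‖L‖ = 1 ∧ 1 - ε * (T + 1) ≤ ‖⟪ψ, tensorVec L ψ₂⟫_ℂ‖ ^ 2 := by
  classical
  by_cases hnt : 1 - ε * ((T : ℝ) + 1) ≤ 0
  · refine ⟨EuclideanSpace.single ⟨0, hd₁⟩ 1, ?_, ?_⟩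
    · simp [EuclideanSpace.norm_single]
    · have := sq_nonneg ‖⟪ψ, tensorVec (EuclideanSpace.single (⟨0, hd₁⟩ : Fin d₁) 1) ψ₂⟫_ℂ‖
      linarith
  push_neg at hnt
  set X : EuclideanSpace ℂ (Fin (T + 1) × (Fin dA × (Fin d₁ × Fin d₂))) :=
    reassoc (tensorVec ψ₁ ψ₂) with hX
  set F : Finset (Fin (T + 1)) := Finset.univ.filter (fun t : Fin (T + 1) => t ≠ 0) with hF
  set Y : Fin (T + 1) → EuclideanSpace ℂ (Fin dA × (Fin d₁ × Fin d₂)) :=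
    fun t => WithLp.toLp 2 (fun p : Fin dA × (Fin d₁ × Fin d₂) => ψ₁ ((t, p.1), p.2.1) * ψ₂ p.2.2) with hYdef
  have hsingle : ∀ (t : Fin (T + 1)) (u : EuclideanSpace ℂ (Fin dA × (Fin d₁ × Fin d₂))),
      ⟪tensorVec (EuclideanSpace.single t 1) u, X⟫_ℂ = ⟪u, Y t⟫_ℂ := by
    intro t u
    rw [inner_single_tensor, inner_eucl]
    rfl
  -- the γ's
  set γ : Fin (T + 1) → ℝ := fun t => ∑ a, ∑ j, ‖ψ₁ ((t, a), j)‖ ^ 2 with hγdef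
  have hγnn : ∀ t, 0 ≤ γ t := by
    intro t
    apply Finset.sum_nonneg; intro a _
    apply Finset.sum_nonneg; intro j _
    positivity
  have hγsum : ∑ t, γ t = 1 := by
    have h1 : ∑ q : (Fin (T + 1) × Fin dA) × Fin d₁, ‖ψ₁ q‖ ^ 2 = 1 := by
      rw [← normsq_eucl, hψ₁]; norm_num
    rw [← h1, Fintype.sum_prod_type, Fintype.sum_prod_type]
  have hψ₂sq : ∑ k, ‖ψ₂ k‖ ^ 2 = 1 := by rw [← normsq_eucl, hψ₂]; norm_num
  have hnormY : ∀ t, ‖Y t‖ ^ 2 = γ t := by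
    intro t
    rw [normsq_eucl]
    calc ∑ p : Fin dA × (Fin d₁ × Fin d₂), ‖Y t p‖ ^ 2
        = ∑ a, ∑ j, ∑ k, ‖ψ₁ ((t, a), j)‖ ^ 2 * ‖ψ₂ k‖ ^ 2 := by
          rw [Fintype.sum_prod_type]
          refine Finset.sum_congr rfl fun a _ => ?_
          rw [Fintype.sum_prod_type]
          refine Finset.sum_congr rfl fun j _ => Finset.sum_congr rfl fun k _ => ?_
          simp [hYdef, norm_mul, mul_pow]
      _ = ∑ a, ∑ j, ‖ψ₁ ((t, a), j)‖ ^ 2 := by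
          refine Finset.sum_congr rfl fun a _ => Finset.sum_congr rfl fun j _ => ?_
          rw [← Finset.mul_sum, hψ₂sq, mul_one]
      _ = γ t := rfl
  -- L'
  set L' : EuclideanSpace ℂ (Fin d₁) :=
    WithLp.toLp 2 (fun j : Fin d₁ => ∑ a, (starRingEnd ℂ) (a₀ a) * ψ₁ ((0, a), j)) with hL'def
  have hc0 : ⟪tensorVec a₀ ψ, Y 0⟫_ℂ = ⟪ψ, tensorVec L' ψ₂⟫_ℂ :=
    key_rearrange a₀ ψ ψ₂ (fun a j => ψ₁ ((0, a), j))
  have hL's : ‖L'‖ ^ 2 ≤ γ 0 := by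
    rw [normsq_eucl]
    have hle : ∀ j : Fin d₁, ‖L' j‖ ^ 2 ≤ ∑ a, ‖ψ₁ ((0, a), j)‖ ^ 2 := by
      intro j
      set φ : EuclideanSpace ℂ (Fin dA) := WithLp.toLp 2 (fun a : Fin dA => ψ₁ ((0, a), j)) with hφdef
      have h := norm_inner_le_norm (𝕜 := ℂ) a₀ φ
      rw [ha₀, one_mul] at h
      have h2 : ⟪a₀, φ⟫_ℂ = L' j := by rw [inner_eucl]
      have h3 := pow_le_pow_left₀ (norm_nonneg _) h 2
      rw [h2, normsq_eucl] at h3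
      exact h3
    calc ∑ j, ‖L' j‖ ^ 2 ≤ ∑ j, ∑ a, ‖ψ₁ ((0, a), j)‖ ^ 2 :=
          Finset.sum_le_sum fun j _ => hle j
      _ = γ 0 := Finset.sum_comm
  have hcle : ‖⟪ψ, tensorVec L' ψ₂⟫_ℂ‖ ≤ ‖L'‖ := by
    have h := norm_inner_le_norm (𝕜 := ℂ) ψ (tensorVec L' ψ₂)
    rwa [hψ, one_mul, norm_tensorVec, hψ₂, mul_one] at h
  have hct : ∀ t ∈ F, ‖⟪w t, Y t⟫_ℂ‖ ^ 2 ≤ γ t := by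
    intro t ht
    have ht0 : t ≠ 0 := by simpa [hF] using ht
    have h := norm_inner_le_norm (𝕜 := ℂ) (w t) (Y t)
    rw [hw t ht0, one_mul] at h
    have h3 := pow_le_pow_left₀ (norm_nonneg _) h 2
    rw [hnormY t] at h3
    exact h3
  -- expand the inner product
  have hsqrtpos : (0:ℝ) < Real.sqrt ((T : ℝ) + 1) := Real.sqrt_pos.mpr (by positivity)
  have hinner : ⟪η, X⟫_ℂ = ((Real.sqrt ((T : ℝ) + 1) : ℂ))⁻¹ *
      (⟪ψ, tensorVec L' ψ₂⟫_ℂ + ∑ t ∈ F, ⟪w t, Y t⟫_ℂ) := by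
    rw [hη, inner_smul_left, inner_add_left, sum_inner]
    congr 1
    · rw [map_inv₀, Complex.conj_ofReal]
    · rw [hsingle 0 (tensorVec a₀ ψ), hc0]
      congr 1
      exact Finset.sum_congr rfl fun t _ => hsingle t (w t)
  set cn : ℝ := ‖⟪ψ, tensorVec L' ψ₂⟫_ℂ‖ with hcndef
  set S : ℝ := ∑ t ∈ F, ‖⟪w t, Y t⟫_ℂ‖ with hSdef
  have hSnn : 0 ≤ S := Finset.sum_nonneg fun t _ => norm_nonneg _
  have hnorm2 : ‖⟪η, X⟫_ℂ‖ ^ 2 ≤ ((T : ℝ) + 1)⁻¹ * (cn + S) ^ 2 := by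
    rw [hinner, norm_mul, mul_pow, norm_inv, Complex.norm_real, Real.norm_eq_abs,
      abs_of_pos hsqrtpos, inv_pow, Real.sq_sqrt (by positivity : (0:ℝ) ≤ (T : ℝ) + 1)]
    have hZ : ‖⟪ψ, tensorVec L' ψ₂⟫_ℂ + ∑ t ∈ F, ⟪w t, Y t⟫_ℂ‖ ≤ cn + S :=
      (norm_add_le _ _).trans (add_le_add_right (norm_sum_le F _) cn)
    exact mul_le_mul_of_nonneg_left (pow_le_pow_left₀ (norm_nonneg _) hZ 2)
      (by positivity)
  have hmain : 1 - ε ≤ ((T : ℝ) + 1)⁻¹ * (cn + S) ^ 2 := le_trans hclose hnorm2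
  -- Cauchy–Schwarz for S
  have hcard : (F.card : ℝ) = (T : ℝ) := by
    rw [hF, Finset.filter_ne', Finset.card_erase_of_mem (Finset.mem_univ _)]
    simp
  have hFγ : ∑ t ∈ F, γ t = 1 - γ 0 := by
    have h := Finset.add_sum_erase Finset.univ γ (Finset.mem_univ (0 : Fin (T + 1)))
    rw [hγsum] at h
    rw [hF, Finset.filter_ne']
    linarith
  have hSsq : S ^ 2 ≤ (T : ℝ) * (1 - γ 0) := by
    calc S ^ 2 ≤ (F.card : ℝ) * ∑ t ∈ F, ‖⟪w t, Y t⟫_ℂ‖ ^ 2 :=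
          sq_sum_le_card_mul_sum_sq
      _ ≤ (T : ℝ) * ∑ t ∈ F, γ t := by
          rw [hcard]
          exact mul_le_mul_of_nonneg_left (Finset.sum_le_sum hct) (by positivity)
      _ = (T : ℝ) * (1 - γ 0) := by rw [hFγ]
  -- apply the endgame
  have hγ01 : γ 0 ≤ 1 := by
    rw [← hγsum]
    exact Finset.single_le_sum (fun t _ => hγnn t) (Finset.mem_univ _)
  have hcn2 : cn ^ 2 ≤ ‖L'‖ ^ 2 := pow_le_pow_left₀ (norm_nonneg _) hcle 2
  obtain ⟨hspos, hkey⟩ := endgame (T : ℝ) (‖L'‖ ^ 2) (γ 0) cn S ε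
    (by exact_mod_cast hT) hε (norm_nonneg _) hSnn (by positivity) hcn2 hL's hγ01
    hSsq hmain hnt
  have hL'pos : 0 < ‖L'‖ := by
    rcases (norm_nonneg L').lt_or_eq with h | h
    · exact h
    · exfalso; rw [← h] at hspos; simp at hspos
  refine ⟨((‖L'‖ : ℂ))⁻¹ • L', ?_, ?_⟩
  · rw [norm_smul, norm_inv, Complex.norm_real, Real.norm_eq_abs, abs_of_pos hL'pos,
      inv_mul_cancel₀ hL'pos.ne']
  · rw [tensorVec_smul, inner_smul_right, norm_mul, norm_inv, Complex.norm_real,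
      Real.norm_eq_abs, abs_of_pos hL'pos, mul_pow, inv_pow,
      le_inv_mul_iff₀ hspos]
    exact hkey
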